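/- Fix an integer r ≥ 1. For each integer q ≥ 1 let c_q : ℕ → ℝ be a nonnegative sequence such that ∑_{p=0}^∞ c_q(p)·x^p = (1 − (r + 1/√(1−x))^{−2})^q for every real x ∈ [0,1). Then for every integer p ≥ 1, ∑_{q=1}^∞ h(q)·c_q(p) = h(p). -/

import Mathlib

/-- h(k) = 4^{−k}·binom(2k,k), with binom the central binomial coefficient. -/
noncomputable def hfun (k : ℕ) : ℝ := (Nat.choose (2 * k) k : ℝ) / 4 ^ k


lemma hfun_nonneg (k : ℕ) : 0 ≤ hfun k := by
  unfold hfun; positivity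

lemma hfun_zero : hfun 0 = 1 := by simp [hfun]

lemma hfun_rec (k : ℕ) : 2 * ((k : ℝ) + 1) * hfun (k + 1) = (2 * k + 1) * hfun k := by
  have h := Nat.succ_mul_centralBinom_succ k
  have h' : ((k + 1) * Nat.centralBinom (k + 1) : ℝ) = 2 * (2 * k + 1) * Nat.centralBinom k := by
    exact_mod_cast congrArg (Nat.cast : ℕ → ℝ) h
  simp only [Nat.centralBinom] at h'
  unfold hfun
  have h4 : (4 : ℝ) ^ (k + 1) = 4 * 4 ^ k := by ring
  push_cast at h' ⊢
  field_simp
  rw [h4]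
  have h'' := congrArg (fun z : ℝ => z * 4 ^ k) h'
  nlinarith [h'']

lemma hfun_conv (n : ℕ) : ∑ k ∈ Finset.range (n + 1), hfun k * hfun (n - k) = 1 := by
  induction n with
  | zero => simp [hfun_zero]
  | succ n ih =>
    -- symmetrization lemma, for any m
    have sym : ∀ m : ℕ, 2 * ∑ k ∈ Finset.range (m + 1), (k : ℝ) * (hfun k * hfun (m - k))
        = m * ∑ k ∈ Finset.range (m + 1), hfun k * hfun (m - k) := by
      intro m
      have refl := Finset.sum_range_reflect (fun k => (k : ℝ) * (hfun k * hfun (m - k))) (m + 1)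
      -- refl : ∑ j in range (m+1), f (m + 1 - 1 - j) = ∑ j, f j
      have e1 : ∑ k ∈ Finset.range (m + 1), (k : ℝ) * (hfun k * hfun (m - k))
          = ∑ k ∈ Finset.range (m + 1), ((m : ℝ) - k) * (hfun k * hfun (m - k)) := by
        rw [← refl]
        apply Finset.sum_congr rfl
        intro j hj
        have hjm : j ≤ m := Nat.lt_succ_iff.mp (Finset.mem_range.mp hj)
        have h1 : m + 1 - 1 - j = m - j := by omega
        have h2 : m - (m - j) = j := by omega
        rw [h1, h2]
        rw [Nat.cast_sub hjm]
        ring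
      have : 2 * ∑ k ∈ Finset.range (m + 1), (k : ℝ) * (hfun k * hfun (m - k))
          = ∑ k ∈ Finset.range (m + 1), (k : ℝ) * (hfun k * hfun (m - k))
            + ∑ k ∈ Finset.range (m + 1), ((m : ℝ) - k) * (hfun k * hfun (m - k)) := by
        rw [← e1]; ring
      rw [this, ← Finset.sum_add_distrib, Finset.mul_sum]
      apply Finset.sum_congr rfl
      intro j _; ring
    -- now the induction step
    have key : ((n : ℝ) + 1) * ∑ k ∈ Finset.range (n + 2), hfun k * hfun (n + 1 - k)
        = ((n : ℝ) + 1) * ∑ k ∈ Finset.range (n + 1), hfun k * hfun (n - k) := by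
      have h1 : 2 * ∑ k ∈ Finset.range (n + 2), (k : ℝ) * (hfun k * hfun (n + 1 - k))
          = ((n : ℝ) + 1) * ∑ k ∈ Finset.range (n + 2), hfun k * hfun (n + 1 - k) := by
        have := sym (n + 1); push_cast at this ⊢; convert this using 2
      rw [← h1]
      -- drop k = 0 term and reindex
      have h2 : ∑ k ∈ Finset.range (n + 2), (k : ℝ) * (hfun k * hfun (n + 1 - k))
          = ∑ j ∈ Finset.range (n + 1), ((j : ℝ) + 1) * (hfun (j + 1) * hfun (n - j)) := by
        rw [Finset.sum_range_succ' (fun k => (k : ℝ) * (hfun k * hfun (n + 1 - k))) (n + 1)]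
        simp only [Nat.cast_zero, zero_mul, add_zero]
        apply Finset.sum_congr rfl
        intro j hj
        have : n + 1 - (j + 1) = n - j := by omega
        rw [this]; push_cast; ring
      rw [h2]
      have h3 : ∀ j ∈ Finset.range (n + 1), 2 * (((j : ℝ) + 1) * (hfun (j + 1) * hfun (n - j)))
          = (2 * j + 1) * (hfun j * hfun (n - j)) := by
        intro j _
        have := hfun_rec j
        nlinarith [this, hfun_nonneg (n - j)]
      calc 2 * ∑ j ∈ Finset.range (n + 1), ((j : ℝ) + 1) * (hfun (j + 1) * hfun (n - j))
          = ∑ j ∈ Finset.range (n + 1), 2 * (((j : ℝ) + 1) * (hfun (j + 1) * hfun (n - j))) := by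
            rw [Finset.mul_sum]
        _ = ∑ j ∈ Finset.range (n + 1), (2 * (j : ℝ) + 1) * (hfun j * hfun (n - j)) :=
            Finset.sum_congr rfl h3
        _ = 2 * ∑ j ∈ Finset.range (n + 1), (j : ℝ) * (hfun j * hfun (n - j))
            + ∑ j ∈ Finset.range (n + 1), hfun j * hfun (n - j) := by
            rw [Finset.mul_sum, ← Finset.sum_add_distrib]
            apply Finset.sum_congr rfl; intro j _; ring
        _ = (n : ℝ) * ∑ j ∈ Finset.range (n + 1), hfun j * hfun (n - j)
            + ∑ j ∈ Finset.range (n + 1), hfun j * hfun (n - j) := by rw [sym n]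
        _ = ((n : ℝ) + 1) * ∑ j ∈ Finset.range (n + 1), hfun j * hfun (n - j) := by ring
    have hpos : ((n : ℝ) + 1) ≠ 0 := by positivity
    have := mul_left_cancel₀ hpos key
    rw [this, ih]

lemma hfun_le_one (k : ℕ) : hfun k ≤ 1 := by
  have h := hfun_conv (2 * k)
  have hk : k ∈ Finset.range (2 * k + 1) := by simp; omega
  have hterm : hfun k * hfun (2 * k - k) ≤ 1 := by
    rw [← h]
    apply Finset.single_le_sum (f := fun j => hfun j * hfun (2 * k - j)) _ hk
    intro i _; exact mul_nonneg (hfun_nonneg i) (hfun_nonneg _)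
  have h2 : 2 * k - k = k := by omega
  rw [h2] at hterm
  nlinarith [hfun_nonneg k]

lemma summable_hfun {y : ℝ} (h0 : 0 ≤ y) (h1 : y < 1) :
    Summable (fun k => hfun k * y ^ k) := by
  apply Summable.of_nonneg_of_le
    (fun k => mul_nonneg (hfun_nonneg k) (pow_nonneg h0 k))
    (fun k => mul_le_of_le_one_left (pow_nonneg h0 k) (hfun_le_one k))
  exact summable_geometric_of_lt_one h0 h1

lemma hasSum_hfun {y : ℝ} (h0 : 0 ≤ y) (h1 : y < 1) :
    HasSum (fun k => hfun k * y ^ k) (1 / Real.sqrt (1 - y)) := by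
  have hs := summable_hfun h0 h1
  set F := ∑' k, hfun k * y ^ k with hF
  have habs : Summable fun k => ‖hfun k * y ^ k‖ := by
    have : ∀ k, ‖hfun k * y ^ k‖ = hfun k * y ^ k := fun k =>
      Real.norm_of_nonneg (mul_nonneg (hfun_nonneg k) (pow_nonneg h0 k))
    simpa [this] using hs
  have hcauchy := hasSum_sum_range_mul_of_summable_norm habs habs
  have hinner : ∀ n : ℕ, (∑ k ∈ Finset.range (n + 1),
      (hfun k * y ^ k) * (hfun (n - k) * y ^ (n - k))) = y ^ n := by
    intro n
    have : ∀ k ∈ Finset.range (n + 1),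
        (hfun k * y ^ k) * (hfun (n - k) * y ^ (n - k)) = (hfun k * hfun (n - k)) * y ^ n := by
      intro k hk
      have hkn : k ≤ n := Nat.lt_succ_iff.mp (Finset.mem_range.mp hk)
      have : y ^ k * y ^ (n - k) = y ^ n := by
        rw [← pow_add]; congr 1; omega
      calc (hfun k * y ^ k) * (hfun (n - k) * y ^ (n - k))
          = (hfun k * hfun (n - k)) * (y ^ k * y ^ (n - k)) := by ring
        _ = (hfun k * hfun (n - k)) * y ^ n := by rw [this]
    rw [Finset.sum_congr rfl this, ← Finset.sum_mul, hfun_conv, one_mul]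
  simp only [hinner] at hcauchy
  -- hcauchy : HasSum (fun n => y ^ n) (F * F)
  have hgeom : HasSum (fun n : ℕ => y ^ n) (1 / (1 - y)) := by
    simpa [one_div] using hasSum_geometric_of_lt_one h0 h1
  have hFF : F * F = 1 / (1 - y) := hcauchy.unique hgeom
  have hF1 : (1 : ℝ) ≤ F := by
    have := le_hasSum hs.hasSum 0 (fun i _ => mul_nonneg (hfun_nonneg i) (pow_nonneg h0 i))
    simpa [hfun_zero] using this
  have hFpos : 0 < F := lt_of_lt_of_le one_pos hF1
  have h1y : 0 < 1 - y := by linarith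
  have hFeq : F = 1 / Real.sqrt (1 - y) := by
    have hsq : Real.sqrt (1 - y) * F = 1 := by
      have h2 : (Real.sqrt (1 - y) * F) ^ 2 = 1 := by
        rw [mul_pow, Real.sq_sqrt h1y.le, sq, hFF]
        field_simp
      have hpos : 0 < Real.sqrt (1 - y) * F := mul_pos (Real.sqrt_pos.mpr h1y) hFpos
      nlinarith [h2, hpos]
    rw [eq_div_iff (by positivity : Real.sqrt (1 - y) ≠ 0)]
    linarith [hsq]
  rw [← hFeq]
  exact hs.hasSum

lemma gw_shifted {r : ℕ} (hr : 1 ≤ r) {x : ℝ} (h0 : 0 ≤ x) (h1 : x < 1) :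
    HasSum (fun q : ℕ => hfun (q + 1) *
        (1 - ((r : ℝ) + 1 / Real.sqrt (1 - x)) ^ (-2 : ℤ)) ^ (q + 1))
      ((r : ℝ) - 1 + 1 / Real.sqrt (1 - x)) := by
  have hsx : 0 < Real.sqrt (1 - x) := Real.sqrt_pos.mpr (by linarith)
  have hsx1 : Real.sqrt (1 - x) ≤ 1 := Real.sqrt_le_one.mpr (by linarith)
  have hinv : 1 ≤ 1 / Real.sqrt (1 - x) := by
    rw [le_div_iff₀ hsx]; linarith
  have hr1 : (1 : ℝ) ≤ (r : ℝ) := by exact_mod_cast hr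
  set t : ℝ := (r : ℝ) + 1 / Real.sqrt (1 - x) with htdef
  have ht2 : 2 ≤ t := by simp only [htdef]; linarith
  have htpos : 0 < t := by linarith
  have hzpow : t ^ (-2 : ℤ) = (1 / t) ^ 2 := by
    rw [zpow_neg, one_div, inv_pow]
    norm_cast
  set g : ℝ := 1 - t ^ (-2 : ℤ) with hgdef
  have h1g : 1 - g = (1 / t) ^ 2 := by rw [hgdef, hzpow]; ring
  have hg0 : 0 ≤ g := by
    have : (1 / t) ^ 2 ≤ 1 := by
      have h1t : 1 / t ≤ 1 := by rw [div_le_one htpos]; linarith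
      have h0t : 0 ≤ 1 / t := by positivity
      nlinarith
    rw [hgdef, hzpow]; linarith
  have hg1 : g < 1 := by
    have : 0 < (1 / t) ^ 2 := by positivity
    rw [hgdef, hzpow]; linarith
  have hsqrt : Real.sqrt (1 - g) = 1 / t := by
    rw [h1g, Real.sqrt_sq (by positivity)]
  have hfull := hasSum_hfun hg0 hg1
  rw [hsqrt, one_div_one_div] at hfull
  -- hfull : HasSum (fun k => hfun k * g ^ k) t
  have hshift : HasSum (fun q : ℕ => hfun (q + 1) * g ^ (q + 1)) (t - 1) := by
    apply (hasSum_nat_add_iff (f := fun k => hfun k * g ^ k) 1).mpr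
    have hv : t - 1 + ∑ i ∈ Finset.range 1, hfun i * g ^ i = t := by
      simp [hfun_zero]
    rw [hv]
    exact hfull
  have hval : t - 1 = (r : ℝ) - 1 + 1 / Real.sqrt (1 - x) := by rw [htdef]; ring
  rw [hval] at hshift
  exact hshift

lemma coeffs_eq_zero (d : ℕ → ℝ)
    (hs : Summable fun p => |d p| * (1 / 2 : ℝ) ^ p)
    (hz : ∀ x : ℝ, 0 < x → x ≤ 1 / 2 → HasSum (fun p => d p * x ^ p) 0) :
    ∀ n, d n = 0 := by
  intro n
  induction n using Nat.strong_induction_on with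
  | _ n ih =>
  have hsC : Summable fun p => |d (p + (n + 1))| * (1 / 2 : ℝ) ^ p := by
    have h1 := (summable_nat_add_iff (n + 1)).mpr hs
    have h2 := h1.mul_right ((2 : ℝ) ^ (n + 1))
    apply h2.congr
    intro p
    have : ((1 : ℝ) / 2) ^ (p + (n + 1)) = (1 / 2 : ℝ) ^ p * (1 / 2 : ℝ) ^ (n + 1) := by
      rw [pow_add]
    rw [this]
    have h4 : ((1 : ℝ) / 2) ^ (n + 1) * (2 : ℝ) ^ (n + 1) = 1 := by
      rw [← mul_pow]; norm_num
    calc |d (p + (n + 1))| * ((1 / 2 : ℝ) ^ p * (1 / 2 : ℝ) ^ (n + 1)) * (2 : ℝ) ^ (n + 1)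
        = |d (p + (n + 1))| * (1 / 2 : ℝ) ^ p * ((1 / 2 : ℝ) ^ (n + 1) * (2 : ℝ) ^ (n + 1)) := by
          ring
      _ = |d (p + (n + 1))| * (1 / 2 : ℝ) ^ p := by rw [h4, mul_one]
  set C := ∑' p, |d (p + (n + 1))| * (1 / 2 : ℝ) ^ p with hCdef
  have hC0 : 0 ≤ C := tsum_nonneg (fun p => by positivity)
  have key : ∀ x : ℝ, 0 < x → x ≤ 1 / 2 → |d n| ≤ C * x := by
    intro x hx hx2
    have hzx := hz x hx hx2
    have hsum0 : ∑ i ∈ Finset.range n, d i * x ^ i = 0 :=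
      Finset.sum_eq_zero (fun i hi => by rw [ih i (Finset.mem_range.mp hi)]; ring)
    have hshift1 : HasSum (fun p => d (p + (n + 1)) * x ^ (p + (n + 1))) (-(d n * x ^ n)) := by
      apply (hasSum_nat_add_iff (f := fun p => d p * x ^ p) (n + 1)).mpr
      have hsum1 : ∑ i ∈ Finset.range (n + 1), d i * x ^ i = d n * x ^ n := by
        rw [Finset.sum_range_succ, hsum0, zero_add]
      have hz0 : -(d n * x ^ n) + d n * x ^ n = 0 := by ring
      rw [hsum1, hz0]
      exact hzx
    have hbnd : ∀ p : ℕ, |d (p + (n + 1)) * x ^ (p + (n + 1))|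
        ≤ |d (p + (n + 1))| * (1 / 2 : ℝ) ^ p * x ^ (n + 1) := by
      intro p
      rw [abs_mul, abs_pow, abs_of_pos hx]
      have : x ^ (p + (n + 1)) = x ^ p * x ^ (n + 1) := pow_add x p (n + 1)
      rw [this, ← mul_assoc]
      apply mul_le_mul_of_nonneg_right _ (by positivity)
      apply mul_le_mul_of_nonneg_left _ (abs_nonneg _)
      exact pow_le_pow_left₀ hx.le hx2 p
    have hsum_rhs : Summable fun p => |d (p + (n + 1))| * (1 / 2 : ℝ) ^ p * x ^ (n + 1) :=
      hsC.mul_right _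
    have habs : Summable fun p => |d (p + (n + 1)) * x ^ (p + (n + 1))| :=
      Summable.of_nonneg_of_le (fun p => abs_nonneg _) hbnd hsum_rhs
    have htsum_eq : ∑' p, d (p + (n + 1)) * x ^ (p + (n + 1)) = -(d n * x ^ n) :=
      hshift1.tsum_eq
    have h5 : |d n * x ^ n| ≤ ∑' p, |d (p + (n + 1))| * (1 / 2 : ℝ) ^ p * x ^ (n + 1) := by
      calc |d n * x ^ n| = |∑' p, d (p + (n + 1)) * x ^ (p + (n + 1))| := by
            rw [htsum_eq, abs_neg]
        _ ≤ ∑' p, |d (p + (n + 1)) * x ^ (p + (n + 1))| := by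
            have := norm_tsum_le_tsum_norm (f := fun p => d (p + (n + 1)) * x ^ (p + (n + 1)))
              (by simpa only [Real.norm_eq_abs] using habs)
            simpa only [Real.norm_eq_abs] using this
        _ ≤ ∑' p, |d (p + (n + 1))| * (1 / 2 : ℝ) ^ p * x ^ (n + 1) :=
            Summable.tsum_le_tsum hbnd habs hsum_rhs
    have h6 : ∑' p, |d (p + (n + 1))| * (1 / 2 : ℝ) ^ p * x ^ (n + 1) = C * x ^ (n + 1) :=
      tsum_mul_right
    rw [h6] at h5
    have h7 : |d n| * x ^ n ≤ (C * x) * x ^ n := by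
      rw [abs_mul, abs_of_pos (pow_pos hx n)] at h5
      calc |d n| * x ^ n ≤ C * x ^ (n + 1) := h5
        _ = (C * x) * x ^ n := by ring
    exact le_of_mul_le_mul_right h7 (pow_pos hx n)
  by_contra hne
  have hpos : 0 < |d n| := abs_pos.mpr hne
  set x : ℝ := min (1 / 2) (|d n| / (2 * C + 1)) with hxdef
  have hx0 : 0 < x := lt_min (by norm_num) (by positivity)
  have hx2 : x ≤ 1 / 2 := min_le_left _ _
  have hxd : x ≤ |d n| / (2 * C + 1) := min_le_right _ _
  have := key x hx0 hx2
  have hCx : C * x ≤ C * (|d n| / (2 * C + 1)) := mul_le_mul_of_nonneg_left hxd hC0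
  have hy0 : 0 < |d n| / (2 * C + 1) := by positivity
  have hfinal : C * (|d n| / (2 * C + 1)) < |d n| := by
    have hy : |d n| = |d n| / (2 * C + 1) * (2 * C + 1) := by field_simp
    nlinarith [mul_nonneg hC0 hy0.le, hy0, hy]
  linarith

/-- Fix r ≥ 1. If for each q ≥ 1 the nonnegative sequence (c_q(p))_p satisfies
∑_p c_q(p)·x^p = (1 − (r + 1/√(1−x))^{−2})^q for all x ∈ [0,1), then for every
p ≥ 1 one has ∑_{q=1}^∞ h(q)·c_q(p) = h(p): the sequence (h(k))_{k≥1} is an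
infinite stationary measure for the corresponding Galton–Watson process. -/
theorem stationary_measure (r : ℕ) (hr : 1 ≤ r) (c : ℕ → ℕ → ℝ)
    (hc : ∀ q p, 0 ≤ c q p)
    (hsum : ∀ q : ℕ, 1 ≤ q → ∀ x : ℝ, 0 ≤ x → x < 1 →
      HasSum (fun p : ℕ => c q p * x ^ p)
        ((1 - ((r : ℝ) + 1 / Real.sqrt (1 - x)) ^ (-2 : ℤ)) ^ q)) :
    ∀ p : ℕ, 1 ≤ p →
      HasSum (fun q : ℕ => hfun (q + 1) * c (q + 1) p) (hfun p) := by
  have hr1 : (1 : ℝ) ≤ (r : ℝ) := by exact_mod_cast hr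
  have hslice : ∀ (q : ℕ) (x : ℝ), 0 ≤ x → x < 1 →
      HasSum (fun p => hfun (q + 1) * c (q + 1) p * x ^ p)
        (hfun (q + 1) * (1 - ((r : ℝ) + 1 / Real.sqrt (1 - x)) ^ (-2 : ℤ)) ^ (q + 1)) := by
    intro q x h0 h1
    have := (hsum (q + 1) (by omega) x h0 h1).mul_left (hfun (q + 1))
    simpa [mul_assoc] using this
  have hdouble : ∀ x : ℝ, 0 ≤ x → x < 1 →
      Summable (fun qp : ℕ × ℕ => hfun (qp.1 + 1) * c (qp.1 + 1) qp.2 * x ^ qp.2) := by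
    intro x h0 h1
    rw [summable_prod_of_nonneg
      (fun qp => mul_nonneg (mul_nonneg (hfun_nonneg _) (hc _ _)) (pow_nonneg h0 _))]
    refine ⟨fun q => (hslice q x h0 h1).summable, ?_⟩
    have heq : (fun q => ∑' p, hfun (q + 1) * c (q + 1) p * x ^ p)
        = fun q => hfun (q + 1) *
            (1 - ((r : ℝ) + 1 / Real.sqrt (1 - x)) ^ (-2 : ℤ)) ^ (q + 1) := by
      funext q; exact (hslice q x h0 h1).tsum_eq
    rw [heq]
    exact (gw_shifted hr h0 h1).summable
  have hAsumm : ∀ p : ℕ, Summable fun q => hfun (q + 1) * c (q + 1) p := by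
    intro p
    have hd := hdouble (1 / 2) (by norm_num) (by norm_num)
    have hinj : Function.Injective (fun q : ℕ => ((q, p) : ℕ × ℕ)) := by
      intro a b h; simpa using congrArg Prod.fst h
    have hsl := hd.comp_injective hinj
    have h2 := hsl.mul_right ((2 : ℝ) ^ p)
    apply h2.congr
    intro q
    have hmp : ((1 : ℝ) / 2) ^ p * 2 ^ p = 1 := by rw [← mul_pow]; norm_num
    calc hfun (q + 1) * c (q + 1) p * (1 / 2 : ℝ) ^ p * 2 ^ p
        = hfun (q + 1) * c (q + 1) p * ((1 / 2 : ℝ) ^ p * 2 ^ p) := by ring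
      _ = hfun (q + 1) * c (q + 1) p := by rw [hmp, mul_one]
  have hA : ∀ x : ℝ, 0 ≤ x → x < 1 →
      HasSum (fun p => (∑' q, hfun (q + 1) * c (q + 1) p) * x ^ p)
        ((r : ℝ) - 1 + 1 / Real.sqrt (1 - x)) := by
    intro x h0 h1
    have hd := hdouble x h0 h1
    have h1' := hd.hasSum
    have h2 := h1'.prod_fiberwise (fun q => hslice q x h0 h1)
    have hval := h2.unique (gw_shifted hr h0 h1)
    rw [hval] at h1'
    have hswap := ((Equiv.prodComm ℕ ℕ).hasSum_iff).mpr h1'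
    exact hswap.prod_fiberwise (fun p => (hAsumm p).hasSum.mul_right (x ^ p))
  set A : ℕ → ℝ := fun p => ∑' q, hfun (q + 1) * c (q + 1) p with hAdef
  have hAnn : ∀ p, 0 ≤ A p :=
    fun p => tsum_nonneg (fun q => mul_nonneg (hfun_nonneg _) (hc _ _))
  set d : ℕ → ℝ := fun p => A p - hfun p - (if p = 0 then (r : ℝ) - 1 else 0) with hddef
  have hind : ∀ x : ℝ,
      HasSum (fun p : ℕ => (if p = 0 then (r : ℝ) - 1 else 0) * x ^ p) ((r : ℝ) - 1) := by
    intro x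
    have heq : (fun p : ℕ => (if p = 0 then (r : ℝ) - 1 else 0) * x ^ p)
        = fun p : ℕ => if p = 0 then (r : ℝ) - 1 else 0 := by
      funext p; by_cases hp0 : p = 0 <;> simp [hp0]
    rw [heq]
    exact hasSum_ite_eq 0 ((r : ℝ) - 1)
  have hz : ∀ x : ℝ, 0 < x → x ≤ 1 / 2 → HasSum (fun p => d p * x ^ p) 0 := by
    intro x hx hx2
    have h0 : (0 : ℝ) ≤ x := hx.le
    have h1 : x < 1 := by linarith
    have hA' := hA x h0 h1
    have hh := hasSum_hfun h0 h1
    have hcomb := (hA'.sub hh).sub (hind x)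
    have hval : ((r : ℝ) - 1 + 1 / Real.sqrt (1 - x)) - 1 / Real.sqrt (1 - x)
        - ((r : ℝ) - 1) = 0 := by ring
    rw [hval] at hcomb
    apply HasSum.congr_fun hcomb
    intro p
    simp only [hddef]
    ring
  have hs : Summable fun p => |d p| * (1 / 2 : ℝ) ^ p := by
    have he0 : ∀ p : ℕ, 0 ≤ (if p = 0 then (r : ℝ) - 1 else 0) := by
      intro p; split
      · linarith
      · exact le_refl 0
    have habs : ∀ p : ℕ, |d p| ≤ A p + hfun p + (if p = 0 then (r : ℝ) - 1 else 0) := by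
      intro p
      rw [abs_le]
      constructor
      · simp only [hddef]
        linarith [hAnn p, hfun_nonneg p, he0 p]
      · simp only [hddef]
        linarith [hAnn p, hfun_nonneg p, he0 p]
    have S1 : Summable fun p => A p * (1 / 2 : ℝ) ^ p :=
      (hA (1 / 2) (by norm_num) (by norm_num)).summable
    have S2 : Summable fun p => hfun p * (1 / 2 : ℝ) ^ p :=
      summable_hfun (by norm_num) (by norm_num)
    have S3 : Summable fun p : ℕ => (if p = 0 then (r : ℝ) - 1 else 0) * (1 / 2 : ℝ) ^ p :=
      (hind (1 / 2)).summable
    have Smaj : Summable fun p =>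
        (A p + hfun p + (if p = 0 then (r : ℝ) - 1 else 0)) * (1 / 2 : ℝ) ^ p := by
      apply ((S1.add S2).add S3).congr
      intro p; ring
    apply Summable.of_nonneg_of_le (fun p => by positivity) _ Smaj
    intro p
    exact mul_le_mul_of_nonneg_right (habs p) (by positivity)
  have hall := coeffs_eq_zero d hs hz
  intro p hp
  have hdp := hall p
  have hp0 : p ≠ 0 := by omega
  simp only [hddef, hp0, if_false] at hdp
  have hfinal : A p = hfun p := by linarith [hdp]
  rw [← hfinal]
  exact (hAsumm p).hasSum
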